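/- (Existence and uniqueness of the equilibrium reinsurance premium, Proposition 4.2.) Let A > 0, C > 0, C₂ > 0, β > 0, and let L = ( −(2C−1) + √((2C−1)² + 8C) )/2. Then there exists a unique pair (ξ̄₁, ξ̄₂) of positive real numbers simultaneously satisfying C·A/ξ̄₁ = G( β·ξ̄₂·(1/A + 1/(2ξ̄₁)) ) and ξ̄₂ = (A/β)·( 1 + C₂ − A/(A + 2ξ̄₁) ); moreover ξ̄₁ lies in the open interval ( C·A/L, A·(2C+1)/2 ). -/

import Mathlib

/-- The function e(x) = (2/x²)·eˣ − (1 + 2/x + 2/x²). -/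
noncomputable def eFun (x : ℝ) : ℝ :=
  2 / x ^ 2 * Real.exp x - (1 + 2 / x + 2 / x ^ 2)

/-- The function g(x) for a parameter C. -/
noncomputable def gFun (C x : ℝ) : ℝ :=
  (1 / 2) * (-(2 * C - 1 + x * (2 * C + 1)) +
    Real.sqrt ((2 * C - 1 + x * (2 * C + 1)) ^ 2 + 8 * C * (x + 1)))

/-- The composite G = g ∘ e. -/
noncomputable def GFun (C x : ℝ) : ℝ := gFun C (eFun x)

open Real Set

/- ### Auxiliary lemmas about `eFun` -/

lemma stmt14_exp_quad {t : ℝ} (ht : 0 < t) : t ^ 2 + 2 * t + 2 < 2 * Real.exp t := by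
  have h := Real.sum_le_exp_of_nonneg ht.le 4
  simp [Finset.sum_range_succ, Nat.factorial] at h
  nlinarith [pow_pos ht 3]

lemma stmt14_eFun_pos {x : ℝ} (hx : 0 < x) : 0 < eFun x := by
  have h := stmt14_exp_quad hx
  have hx2 : (0:ℝ) < x ^ 2 := by positivity
  have he : eFun x = (2 * Real.exp x - (x ^ 2 + 2 * x + 2)) / x ^ 2 := by
    unfold eFun; field_simp
  rw [he]
  exact div_pos (by linarith) hx2

lemma stmt14_eFun_hasDeriv {x : ℝ} (hx : x ≠ 0) :
    HasDerivAt eFun (2 / x ^ 4 * x * ((x - 2) * Real.exp x + x + 2)) x := by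
  have hx2 : x ^ 2 ≠ 0 := pow_ne_zero _ hx
  have hp : HasDerivAt (fun x : ℝ => x ^ 2) (2 * x) x := by
    simpa using hasDerivAt_pow 2 x
  have hdiv : HasDerivAt (fun x : ℝ => 2 / x ^ 2)
      ((0 * x ^ 2 - 2 * (2 * x)) / (x ^ 2) ^ 2) x :=
    (hasDerivAt_const x 2).div hp hx2
  have hmul := hdiv.mul (Real.hasDerivAt_exp x)
  have hdiv1 : HasDerivAt (fun x : ℝ => 2 / x)
      ((0 * x - 2 * 1) / x ^ 2) x :=
    (hasDerivAt_const x 2).div (hasDerivAt_id x) hx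
  have hrest := ((hasDerivAt_const x 1).add hdiv1).add hdiv
  have := hmul.sub hrest
  unfold eFun
  refine this.congr_deriv ?_
  field_simp
  ring

lemma stmt14_aux1 {x : ℝ} (hx : 0 < x) : 0 < (x - 1) * Real.exp x + 1 := by
  have hmono : StrictMonoOn (fun x : ℝ => (x - 1) * Real.exp x + 1) (Ici 0) := by
    apply strictMonoOn_of_deriv_pos (convex_Ici 0)
    · fun_prop
    · intro t ht
      rw [interior_Ici] at ht
      have hd : HasDerivAt (fun x : ℝ => (x - 1) * Real.exp x + 1)
          (t * Real.exp t) t := by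
        have := (((hasDerivAt_id' (x := t)).sub_const 1).mul
          (Real.hasDerivAt_exp t)).add_const 1
        refine this.congr_deriv ?_
        ring
      rw [hd.deriv]
      exact mul_pos ht (Real.exp_pos t)
  have := hmono (self_mem_Ici) (le_of_lt (show (0:ℝ) < x from hx)) hx
  simpa using this

lemma stmt14_psi_pos {x : ℝ} (hx : 0 < x) : 0 < (x - 2) * Real.exp x + x + 2 := by
  have hmono : StrictMonoOn (fun x : ℝ => (x - 2) * Real.exp x + x + 2) (Ici 0) := by
    apply strictMonoOn_of_deriv_pos (convex_Ici 0)
    · fun_prop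
    · intro t ht
      rw [interior_Ici] at ht
      have hd : HasDerivAt (fun x : ℝ => (x - 2) * Real.exp x + x + 2)
          ((t - 1) * Real.exp t + 1) t := by
        have := ((((hasDerivAt_id' (x := t)).sub_const 2).mul
          (Real.hasDerivAt_exp t)).add (hasDerivAt_id' (x := t))).add_const 2
        refine this.congr_deriv ?_
        ring
      rw [hd.deriv]
      exact stmt14_aux1 ht
  have := hmono (self_mem_Ici) (le_of_lt (show (0:ℝ) < x from hx)) hx
  simpa using this

lemma stmt14_eFun_mono : StrictMonoOn eFun (Ioi 0) := by
  apply strictMonoOn_of_deriv_pos (convex_Ioi 0)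
  · exact fun x hx => ((stmt14_eFun_hasDeriv (ne_of_gt hx)).continuousAt).continuousWithinAt
  · intro t ht
    rw [interior_Ioi] at ht
    have ht0 : (0:ℝ) < t := ht
    rw [(stmt14_eFun_hasDeriv (ne_of_gt ht0)).deriv]
    have h1 : (0:ℝ) < 2 / t ^ 4 * t := by positivity
    exact mul_pos h1 (stmt14_psi_pos ht0)

/- ### Auxiliary lemmas about `gFun` -/

lemma stmt14_gD_pos {C s : ℝ} (hC : 0 < C) (hs : 0 ≤ s) :
    0 < (2 * C - 1 + s * (2 * C + 1)) ^ 2 + 8 * C * (s + 1) := by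
  nlinarith [sq_nonneg (2 * C - 1 + s * (2 * C + 1))]

lemma stmt14_g_quad {C s : ℝ} (hC : 0 < C) (hs : 0 ≤ s) :
    gFun C s ^ 2 + (2 * C - 1 + s * (2 * C + 1)) * gFun C s - 2 * C * (s + 1) = 0 := by
  have h := Real.sq_sqrt (stmt14_gD_pos hC hs).le
  unfold gFun
  linear_combination (1/4 : ℝ) * h

lemma stmt14_g_pos {C s : ℝ} (hC : 0 < C) (hs : 0 ≤ s) : 0 < gFun C s := by
  have h1 : 2 * C - 1 + s * (2 * C + 1) <
      Real.sqrt ((2 * C - 1 + s * (2 * C + 1)) ^ 2 + 8 * C * (s + 1)) := by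
    rcases le_or_gt (2 * C - 1 + s * (2 * C + 1)) 0 with h | h
    · exact lt_of_le_of_lt h (Real.sqrt_pos.2 (stmt14_gD_pos hC hs))
    · calc 2 * C - 1 + s * (2 * C + 1)
          = Real.sqrt ((2 * C - 1 + s * (2 * C + 1)) ^ 2) :=
            (Real.sqrt_sq h.le).symm
        _ < _ := Real.sqrt_lt_sqrt (by positivity) (by nlinarith)
  unfold gFun
  linarith

lemma stmt14_g_unique {C s y : ℝ} (hC : 0 < C) (hs : 0 ≤ s) (hy : 0 < y)
    (hq : y ^ 2 + (2 * C - 1 + s * (2 * C + 1)) * y - 2 * C * (s + 1) = 0) :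
    gFun C s = y := by
  have h2 : 0 < 2 * y + (2 * C - 1 + s * (2 * C + 1)) := by nlinarith
  have key : Real.sqrt ((2 * C - 1 + s * (2 * C + 1)) ^ 2 + 8 * C * (s + 1))
      = 2 * y + (2 * C - 1 + s * (2 * C + 1)) := by
    rw [show (2 * C - 1 + s * (2 * C + 1)) ^ 2 + 8 * C * (s + 1)
        = (2 * y + (2 * C - 1 + s * (2 * C + 1))) ^ 2 by linear_combination (-4 : ℝ) * hq]
    exact Real.sqrt_sq h2.le
  unfold gFun
  rw [key]
  ring

lemma stmt14_g_lt_one {C s : ℝ} (hC : 0 < C) (hs : 0 < s) : gFun C s < 1 := by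
  have hq := stmt14_g_quad hC hs.le
  have hy := stmt14_g_pos hC hs.le
  by_contra h
  push_neg at h
  have h1 : (0:ℝ) < (2 * C + 1) * gFun C s - 2 * C := by nlinarith
  nlinarith [mul_nonneg (sub_nonneg.2 h) (show (0:ℝ) ≤ gFun C s + 2 * C by linarith),
    mul_pos hs h1]

lemma stmt14_g_gt {C s : ℝ} (hC : 0 < C) (hs : 0 < s) : 2 * C < (2 * C + 1) * gFun C s := by
  have hq := stmt14_g_quad hC hs.le
  have hy := stmt14_g_pos hC hs.le
  by_contra h
  push_neg at h
  have hlt1 : gFun C s < 1 := by nlinarith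
  nlinarith [mul_nonneg hs.le (sub_nonneg.2 h),
    mul_pos (sub_pos.2 hlt1) (show (0:ℝ) < gFun C s + 2 * C by linarith)]

/- ### The one-dimensional reformulation -/

/-- The argument of `G` as a function of `y = C·A/ξ₁`. -/
noncomputable def stmt14_tY (C C₂ y : ℝ) : ℝ := 1 + C₂ + C₂ * y / (2 * C)

/-- `H(y) = e(tY(y))·((2C+1)y − 2C) − (1−y)(y+2C)`; zeros of `H` in the relevant
range correspond to equilibria. -/
noncomputable def stmt14_H (C C₂ y : ℝ) : ℝ :=
  eFun (stmt14_tY C C₂ y) * ((2 * C + 1) * y - 2 * C) - (1 - y) * (y + 2 * C)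

lemma stmt14_tY_pos {C C₂ y : ℝ} (hC : 0 < C) (hC₂ : 0 < C₂) (hy : 0 < y) :
    0 < stmt14_tY C C₂ y := by
  have h1 : 0 < C₂ * y / (2 * C) := div_pos (mul_pos hC₂ hy) (by linarith)
  unfold stmt14_tY
  linarith

lemma stmt14_fwd {C C₂ y : ℝ} (hC : 0 < C) (hC₂ : 0 < C₂) (hy : 0 < y)
    (heq : y = GFun C (stmt14_tY C C₂ y)) :
    stmt14_H C C₂ y = 0 ∧ 2 * C < (2 * C + 1) * y ∧ y < 1 := by
  have ht := stmt14_tY_pos hC hC₂ hy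
  have hs := stmt14_eFun_pos ht
  unfold GFun at heq
  refine ⟨?_, ?_, ?_⟩
  · have hq := stmt14_g_quad (s := eFun (stmt14_tY C C₂ y)) hC hs.le
    rw [← heq] at hq
    unfold stmt14_H
    linear_combination hq
  · have := stmt14_g_gt (s := eFun (stmt14_tY C C₂ y)) hC hs
    rwa [← heq] at this
  · have := stmt14_g_lt_one (s := eFun (stmt14_tY C C₂ y)) hC hs
    rwa [← heq] at this

lemma stmt14_bwd {C C₂ y : ℝ} (hC : 0 < C) (hC₂ : 0 < C₂) (hy : 0 < y)
    (hH : stmt14_H C C₂ y = 0) : y = GFun C (stmt14_tY C C₂ y) := by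
  have ht := stmt14_tY_pos hC hC₂ hy
  have hs := stmt14_eFun_pos ht
  unfold stmt14_H at hH
  have hq : y ^ 2 + (2 * C - 1 + eFun (stmt14_tY C C₂ y) * (2 * C + 1)) * y
      - 2 * C * (eFun (stmt14_tY C C₂ y) + 1) = 0 := by linear_combination hH
  have := stmt14_g_unique hC hs.le hy hq
  unfold GFun
  exact this.symm

lemma stmt14_uniq {C C₂ y₁ y₂ : ℝ} (hC : 0 < C) (hC₂ : 0 < C₂)
    (hb1 : 2 * C < (2 * C + 1) * y₁) (hl1 : y₁ < 1)
    (hb2 : 2 * C < (2 * C + 1) * y₂) (hl2 : y₂ < 1)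
    (hH1 : stmt14_H C C₂ y₁ = 0) (hH2 : stmt14_H C C₂ y₂ = 0) : y₁ = y₂ := by
  have key : ∀ z₁ z₂ : ℝ, z₁ < z₂ → 2 * C < (2 * C + 1) * z₁ → z₁ < 1 →
      2 * C < (2 * C + 1) * z₂ → z₂ < 1 →
      stmt14_H C C₂ z₁ = 0 → stmt14_H C C₂ z₂ = 0 → False := by
    intro z₁ z₂ hlt b1 l1 b2 l2 h1 h2
    have hz1 : 0 < z₁ := by nlinarith
    have hz2 : 0 < z₂ := by nlinarith
    have ht1 := stmt14_tY_pos (y := z₁) hC hC₂ hz1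
    have ht2 := stmt14_tY_pos (y := z₂) hC hC₂ hz2
    have htlt : stmt14_tY C C₂ z₁ < stmt14_tY C C₂ z₂ := by
      have h2C : (0:ℝ) < 2 * C := by linarith
      unfold stmt14_tY
      have hq : C₂ * z₁ / (2 * C) < C₂ * z₂ / (2 * C) := by
        gcongr
      linarith
    have hslt : eFun (stmt14_tY C C₂ z₁) < eFun (stmt14_tY C C₂ z₂) :=
      stmt14_eFun_mono ht1 ht2 htlt
    have hs1 : 0 < eFun (stmt14_tY C C₂ z₁) := stmt14_eFun_pos ht1
    have hd1 : 0 < (2 * C + 1) * z₁ - 2 * C := by linarith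
    have hd2 : 0 < (2 * C + 1) * z₂ - 2 * C := by linarith
    unfold stmt14_H at h1 h2
    obtain ⟨s₁, hg1⟩ : ∃ s, s = eFun (stmt14_tY C C₂ z₁) := ⟨_, rfl⟩
    obtain ⟨s₂, hg2⟩ : ∃ s, s = eFun (stmt14_tY C C₂ z₂) := ⟨_, rfl⟩
    rw [← hg1] at h1 hslt hs1
    rw [← hg2] at h2 hslt
    have hid : (2 * C + 1) ^ 2 *
        ((1 - z₁) * (z₁ + 2 * C) * ((2 * C + 1) * z₂ - 2 * C)
          - (1 - z₂) * (z₂ + 2 * C) * ((2 * C + 1) * z₁ - 2 * C))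
        = (((2 * C + 1) * z₂ - 2 * C) - ((2 * C + 1) * z₁ - 2 * C)) *
          (4 * C * (C + 1) + ((2 * C + 1) * z₁ - 2 * C) * ((2 * C + 1) * z₂ - 2 * C)) := by
      ring
    have hpos : 0 < (((2 * C + 1) * z₂ - 2 * C) - ((2 * C + 1) * z₁ - 2 * C)) *
        (4 * C * (C + 1) + ((2 * C + 1) * z₁ - 2 * C) * ((2 * C + 1) * z₂ - 2 * C)) := by
      apply mul_pos (by nlinarith) (by nlinarith [mul_pos hd1 hd2])
    have hsq : (0:ℝ) < (2 * C + 1) ^ 2 := by positivity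
    have hrho : (1 - z₂) * (z₂ + 2 * C) * ((2 * C + 1) * z₁ - 2 * C)
        < (1 - z₁) * (z₁ + 2 * C) * ((2 * C + 1) * z₂ - 2 * C) := by
      nlinarith [hid, hpos, hsq]
    have c1 : s₁ * (((2 * C + 1) * z₁ - 2 * C) * ((2 * C + 1) * z₂ - 2 * C))
        < s₂ * (((2 * C + 1) * z₁ - 2 * C) * ((2 * C + 1) * z₂ - 2 * C)) :=
      mul_lt_mul_of_pos_right hslt (mul_pos hd1 hd2)
    have c2 : s₂ * (((2 * C + 1) * z₁ - 2 * C) * ((2 * C + 1) * z₂ - 2 * C))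
        = (1 - z₂) * (z₂ + 2 * C) * ((2 * C + 1) * z₁ - 2 * C) := by
      linear_combination ((2 * C + 1) * z₁ - 2 * C) * h2
    have c3 : s₁ * (((2 * C + 1) * z₁ - 2 * C) * ((2 * C + 1) * z₂ - 2 * C))
        = (1 - z₁) * (z₁ + 2 * C) * ((2 * C + 1) * z₂ - 2 * C) := by
      linear_combination ((2 * C + 1) * z₂ - 2 * C) * h1
    linarith [c1, c2, c3, hrho]
  rcases lt_trichotomy y₁ y₂ with h | h | h
  · exact absurd (key y₁ y₂ h hb1 hl1 hb2 hl2 hH1 hH2) not_false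
  · exact h
  · exact absurd (key y₂ y₁ h hb2 hl2 hb1 hl1 hH2 hH1) not_false

lemma stmt14_exists_y {C C₂ : ℝ} (hC : 0 < C) (hC₂ : 0 < C₂) :
    ∃ y, 2 * C < (2 * C + 1) * y ∧ y < 1 ∧ stmt14_H C C₂ y = 0 := by
  have h2C1 : (0:ℝ) < 2 * C + 1 := by linarith
  set y₀ : ℝ := 2 * C / (2 * C + 1) with hy₀def
  have hy₀pos : 0 < y₀ := by positivity
  have hy₀lt : y₀ < 1 := by rw [hy₀def, div_lt_one h2C1]; linarith
  have hcont : ContinuousOn (stmt14_H C C₂) (Icc y₀ 1) := by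
    intro y hy
    apply ContinuousAt.continuousWithinAt
    have hypos : 0 < y := lt_of_lt_of_le hy₀pos hy.1
    have htY : ContinuousAt (fun y => stmt14_tY C C₂ y) y := by
      unfold stmt14_tY; fun_prop
    have he : ContinuousAt (fun y => eFun (stmt14_tY C C₂ y)) y :=
      ((stmt14_eFun_hasDeriv (stmt14_tY_pos hC hC₂ hypos).ne').continuousAt).comp htY
    unfold stmt14_H
    exact (he.mul (by fun_prop)).sub (by fun_prop)
  have hd0 : (2 * C + 1) * y₀ - 2 * C = 0 := by
    rw [hy₀def]; field_simp; ring
  have hH0 : stmt14_H C C₂ y₀ < 0 := by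
    unfold stmt14_H
    rw [hd0, mul_zero, zero_sub, neg_lt, neg_zero]
    exact mul_pos (by linarith) (by linarith)
  have hH1 : 0 < stmt14_H C C₂ 1 := by
    have he := stmt14_eFun_pos (stmt14_tY_pos (y := 1) hC hC₂ one_pos)
    unfold stmt14_H
    have h1 : (2 * C + 1) * 1 - 2 * C = 1 := by ring
    rw [h1, mul_one]
    nlinarith
  obtain ⟨y, hyIoo, hHy⟩ := intermediate_value_Ioo hy₀lt.le hcont ⟨hH0, hH1⟩
  refine ⟨y, ?_, hyIoo.2, hHy⟩
  have := hyIoo.1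
  rw [hy₀def] at this
  rw [div_lt_iff₀ h2C1] at this
  linarith [this]

/-- **Proposition 4.2.** There exists a unique positive pair (ξ̄₁, ξ̄₂)
simultaneously satisfying C·A/ξ̄₁ = G(β·ξ̄₂·(1/A + 1/(2ξ̄₁))) and
ξ̄₂ = (A/β)·(1 + C₂ − A/(A + 2ξ̄₁)); moreover ξ̄₁ ∈ (C·A/L, A(2C+1)/2). -/
theorem stmt_14 (A C C₂ β : ℝ) (hA : 0 < A) (hC : 0 < C) (hC₂ : 0 < C₂) (hβ : 0 < β) :
    (∃! p : ℝ × ℝ, 0 < p.1 ∧ 0 < p.2 ∧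
        C * A / p.1 = GFun C (β * p.2 * (1 / A + 1 / (2 * p.1))) ∧
        p.2 = (A / β) * (1 + C₂ - A / (A + 2 * p.1))) ∧
    (∀ p : ℝ × ℝ, 0 < p.1 → 0 < p.2 →
        C * A / p.1 = GFun C (β * p.2 * (1 / A + 1 / (2 * p.1))) →
        p.2 = (A / β) * (1 + C₂ - A / (A + 2 * p.1)) →
        C * A / ((-(2 * C - 1) + Real.sqrt ((2 * C - 1) ^ 2 + 8 * C)) / 2) < p.1 ∧
        p.1 < A * (2 * C + 1) / 2) := by
  have harg : ∀ x : ℝ, 0 < x →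
      β * ((A / β) * (1 + C₂ - A / (A + 2 * x))) * (1 / A + 1 / (2 * x))
        = stmt14_tY C C₂ (C * A / x) := by
    intro x hx
    have h1 : A + 2 * x ≠ 0 := by positivity
    unfold stmt14_tY
    field_simp
    ring
  -- the chosen solution
  obtain ⟨y, hb, hl, hH⟩ := stmt14_exists_y hC hC₂
  have hy : 0 < y := by nlinarith
  set x₁ : ℝ := C * A / y with hx₁def
  have hx₁pos : 0 < x₁ := by rw [hx₁def]; positivity
  have hyx : C * A / x₁ = y := by
    have hCA : C * A ≠ 0 := by positivity
    rw [hx₁def]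
    field_simp
  set x₂ : ℝ := (A / β) * (1 + C₂ - A / (A + 2 * x₁)) with hx₂def
  have hfrac : A / (A + 2 * x₁) < 1 := by
    rw [div_lt_one (by linarith)]; linarith
  have hx₂pos : 0 < x₂ := by
    rw [hx₂def]
    apply mul_pos (by positivity)
    linarith
  have heq1 : C * A / x₁ = GFun C (β * x₂ * (1 / A + 1 / (2 * x₁))) := by
    rw [hx₂def, harg x₁ hx₁pos, hyx]
    exact stmt14_bwd hC hC₂ hy hH
  -- characterization of an arbitrary solution
  have hchar : ∀ p : ℝ × ℝ, 0 < p.1 → 0 < p.2 →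
      C * A / p.1 = GFun C (β * p.2 * (1 / A + 1 / (2 * p.1))) →
      p.2 = (A / β) * (1 + C₂ - A / (A + 2 * p.1)) →
      stmt14_H C C₂ (C * A / p.1) = 0 ∧ 2 * C < (2 * C + 1) * (C * A / p.1) ∧
        C * A / p.1 < 1 := by
    intro p hp1 hp2 he1 he2
    rw [he2, harg p.1 hp1] at he1
    exact stmt14_fwd hC hC₂ (by positivity) he1
  constructor
  · refine ⟨(x₁, x₂), ⟨hx₁pos, hx₂pos, heq1, hx₂def⟩, ?_⟩
    rintro p ⟨hp1, hp2, he1, he2⟩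
    obtain ⟨hH', hb', hl'⟩ := hchar p hp1 hp2 he1 he2
    have hyy : C * A / p.1 = y := stmt14_uniq hC hC₂ hb' hl' hb hl hH' hH
    have hfst : p.1 = x₁ := by
      have h1 : C * A = y * p.1 := (div_eq_iff (ne_of_gt hp1)).1 hyy
      have h2 : C * A = y * x₁ := (div_eq_iff (ne_of_gt hx₁pos)).1 hyx
      exact mul_left_cancel₀ (ne_of_gt hy) (h1 ▸ h2 ▸ rfl)
    have hsnd : p.2 = x₂ := by rw [he2, hfst, hx₂def]
    exact Prod.ext hfst hsnd
  · intro p hp1 hp2 he1 he2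
    obtain ⟨hH', hb', hl'⟩ := hchar p hp1 hp2 he1 he2
    have hL : (-(2 * C - 1) + Real.sqrt ((2 * C - 1) ^ 2 + 8 * C)) / 2 = 1 := by
      rw [show (2 * C - 1) ^ 2 + 8 * C = (2 * C + 1) ^ 2 by ring,
        Real.sqrt_sq (by linarith)]
      ring
    constructor
    · rw [hL, div_one]
      exact (div_lt_one hp1).1 hl'
    · have hq : C * A = (C * A / p.1) * p.1 := (div_mul_cancel₀ _ (ne_of_gt hp1)).symm
      nlinarith [mul_lt_mul_of_pos_right hb' hp1, hq]
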